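/- In the exponential family of stochastic matrices as above, the second derivative of A(θ) = log ρ(θ) satisfies Ä(θ) = E_{(X,Y)∼π_θ⊙P_θ}[(d/dθ log P_θ(X,Y))²] ≥ 0, where (π_θ⊙P_θ)(x,y) = π_θ(x)P_θ(x,y). In particular A is convex. -/

import Mathlib

open Real Filter Finset

private lemma aux12
    {S : Type*} [Fintype S]
    (P : S → S → ℝ) (f : S → ℝ)
    (hP0 : ∀ x y, 0 ≤ P x y)
    (ρ : ℝ → ℝ) (v : ℝ → S → ℝ)
    (hρ : ∀ θ, 0 < ρ θ) (hv : ∀ θ x, 0 < v θ x)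
    (heig : ∀ θ x, ∑ y, P x y * Real.exp (θ * f y) * v θ y = ρ θ * v θ x)
    (hρd : ContDiff ℝ 2 ρ)
    (hvd : ∀ x, ContDiff ℝ 2 fun θ => v θ x)
    (pi : ℝ → S → ℝ)
    (hpi1 : ∀ θ, ∑ x, pi θ x = 1)
    (Q : ℝ → S → S → ℝ)
    (hQdef : ∀ s x y, Q s x y = P x y * Real.exp (s * f y) * v s y / (ρ s * v s x))
    (hpistat : ∀ θ y, ∑ x, pi θ x * Q θ x y = pi θ y)
    (t : ℝ) :
    deriv (deriv fun s => Real.log (ρ s)) t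
      = ∑ x, ∑ y, pi t x * Q t x y
          * (deriv (fun s => Real.log (Q s x y)) t) ^ 2 := by
  -- basic differentiability
  have hρdiff : Differentiable ℝ ρ := hρd.differentiable (by norm_num)
  have hρ'cd : ContDiff ℝ 1 (deriv ρ) := by
    have h : ContDiff ℝ (1+1) ρ := by norm_num; exact hρd
    exact (contDiff_succ_iff_deriv.1 h).2.2
  have hρ'diff : Differentiable ℝ (deriv ρ) := hρ'cd.differentiable one_ne_zero
  have hvdiff : ∀ x, Differentiable ℝ (fun s => v s x) := fun x => (hvd x).differentiable (by norm_num)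
  have hv'diff : ∀ x, Differentiable ℝ (deriv (fun s => v s x)) := by
    intro x
    have h : ContDiff ℝ (1+1) (fun s => v s x) := by norm_num; exact hvd x
    exact ((contDiff_succ_iff_deriv.1 h).2.2).differentiable one_ne_zero
  -- the log-derivative functions
  set a : ℝ → ℝ := fun s => deriv ρ s / ρ s with ha_def
  set b : S → ℝ → ℝ := fun x s => deriv (fun u => v u x) s / v s x with hb_def
  have hA : ∀ s, HasDerivAt (fun u => Real.log (ρ u)) (a s) s := fun s =>
    ((hρdiff s).hasDerivAt).log (hρ s).ne'
  have hderivA : deriv (fun u => Real.log (ρ u)) = a := funext fun s => (hA s).deriv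
  have hLv : ∀ x s, HasDerivAt (fun u => Real.log (v u x)) (b x s) s := fun x s =>
    ((hvdiff x s).hasDerivAt).log (hv s x).ne'
  have hadiff : ∀ s, HasDerivAt a (deriv a s) s := fun s =>
    (((hρ'diff s).div (hρdiff s) (hρ s).ne')).hasDerivAt
  have hbdiff : ∀ x s, HasDerivAt (b x) (deriv (b x) s) s := fun x s =>
    (((hv'diff x s).div (hvdiff x s) (hv s x).ne')).hasDerivAt
  set D : S → S → ℝ → ℝ := fun x y s => f y + b y s - a s - b x s with hD_def
  -- row sums of Q are 1
  have hQrow : ∀ s x, ∑ y, Q s x y = 1 := by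
    intro s x
    simp only [hQdef, ← Finset.sum_div, heig]
    exact div_self (mul_pos (hρ s) (hv s x)).ne'
  have hQpos : ∀ s x y, 0 < P x y → 0 < Q s x y := by
    intro s x y hp
    rw [hQdef]
    exact div_pos (mul_pos (mul_pos hp (Real.exp_pos _)) (hv s y)) (mul_pos (hρ s) (hv s x))
  -- log of Q for positive entries
  have hlogQ : ∀ x y, 0 < P x y → ∀ s, Real.log (Q s x y)
      = Real.log (P x y) + s * f y + Real.log (v s y) - Real.log (ρ s) - Real.log (v s x) := by
    intro x y hp s
    rw [hQdef, Real.log_div (mul_pos (mul_pos hp (Real.exp_pos _)) (hv s y)).ne'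
      (mul_pos (hρ s) (hv s x)).ne', Real.log_mul (mul_pos hp (Real.exp_pos _)).ne' (hv s y).ne',
      Real.log_mul hp.ne' (Real.exp_pos _).ne', Real.log_mul (hρ s).ne' (hv s x).ne', Real.log_exp]
    ring
  -- derivative of log Q
  have hD : ∀ x y, 0 < P x y → ∀ s, HasDerivAt (fun u => Real.log (Q u x y)) (D x y s) s := by
    intro x y hp s
    have hfun : (fun u => Real.log (Q u x y))
        = fun u => Real.log (P x y) + u * f y + Real.log (v u y) - Real.log (ρ u) - Real.log (v u x) :=
      funext (hlogQ x y hp)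
    rw [hfun]
    have h1 := ((((hasDerivAt_const s (Real.log (P x y))).fun_add
      (hasDerivAt_mul_const (f y))).fun_add (hLv y s)).fun_sub (hA s)).fun_sub (hLv x s)
    simpa [hD_def] using h1
  -- derivative of Q itself
  have hQd : ∀ x y s, HasDerivAt (fun u => Q u x y) (Q s x y * D x y s) s := by
    intro x y s
    rcases eq_or_lt_of_le (hP0 x y) with hp | hp
    · have hfun : (fun u => Q u x y) = fun _ => (0:ℝ) := funext fun u => by simp [hQdef, ← hp]
      have hz : Q s x y = 0 := by simp [hQdef, ← hp]
      rw [hfun, hz, zero_mul]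
      exact hasDerivAt_const _ _
    · have h2 := (hD x y hp s).exp
      rw [Real.exp_log (hQpos s x y hp)] at h2
      exact h2.congr_of_eventuallyEq (Eventually.of_forall fun u => (Real.exp_log (hQpos u x y hp)).symm)
  -- first identity: ∑ y, Q * D = 0
  have hfirst : ∀ s x, ∑ y, Q s x y * D x y s = 0 := by
    intro s x
    have h1 : HasDerivAt (fun u => ∑ y, Q u x y) (∑ y, Q s x y * D x y s) s :=
      HasDerivAt.fun_sum fun y _ => hQd x y s
    have h2 : HasDerivAt (fun u => ∑ y, Q u x y) 0 s := by
      have hfun : (fun u : ℝ => ∑ y, Q u x y) = fun _ => (1:ℝ) := funext fun u => hQrow u x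
      rw [hfun]; exact hasDerivAt_const _ _
    exact h1.unique h2
  -- derivative of D
  have hDd : ∀ x y s, HasDerivAt (D x y) (deriv (b y) s - deriv a s - deriv (b x) s) s := by
    intro x y s
    have h1 := (((hasDerivAt_const s (f y)).fun_add (hbdiff y s)).fun_sub (hadiff s)).fun_sub (hbdiff x s)
    simpa [hD_def] using h1
  -- second identity
  have hsecond : ∀ s x, ∑ y, (Q s x y * D x y s * D x y s
      + Q s x y * (deriv (b y) s - deriv a s - deriv (b x) s)) = 0 := by
    intro s x
    have h1 : HasDerivAt (fun u => ∑ y, Q u x y * D x y u)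
        (∑ y, (Q s x y * D x y s * D x y s
          + Q s x y * (deriv (b y) s - deriv a s - deriv (b x) s))) s :=
      HasDerivAt.fun_sum fun y _ => (hQd x y s).fun_mul (hDd x y s)
    have h2 : HasDerivAt (fun u => ∑ y, Q u x y * D x y u) 0 s := by
      have hfun : (fun u : ℝ => ∑ y, Q u x y * D x y u) = fun _ => (0:ℝ) :=
        funext fun u => hfirst u x
      rw [hfun]; exact hasDerivAt_const _ _
    exact h1.unique h2
  -- rearrange second identity
  have hrearr : ∀ x, ∑ y, Q t x y * D x y t ^ 2
      = deriv a t + deriv (b x) t - ∑ y, Q t x y * deriv (b y) t := by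
    intro x
    have h := hsecond t x
    have hexp : ∀ y, Q t x y * D x y t * D x y t
        + Q t x y * (deriv (b y) t - deriv a t - deriv (b x) t)
        = Q t x y * D x y t ^ 2 + Q t x y * deriv (b y) t
          - Q t x y * (deriv a t + deriv (b x) t) := by intro y; ring
    rw [Finset.sum_congr rfl fun y _ => hexp y] at h
    rw [Finset.sum_sub_distrib, Finset.sum_add_distrib, ← Finset.sum_mul, hQrow, one_mul] at h
    linarith [h]
  -- replace the statement's deriv-squared with D squared
  have hterm : ∀ x y, pi t x * Q t x y * (deriv (fun s => Real.log (Q s x y)) t) ^ 2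
      = pi t x * (Q t x y * D x y t ^ 2) := by
    intro x y
    rcases eq_or_lt_of_le (hP0 x y) with hp | hp
    · have hz : Q t x y = 0 := by simp [hQdef, ← hp]
      rw [hz]; ring
    · rw [(hD x y hp t).deriv]; ring
  -- assemble
  calc deriv (deriv fun s => Real.log (ρ s)) t = deriv a t := by rw [hderivA]
    _ = ∑ x, ∑ y, pi t x * Q t x y * (deriv (fun s => Real.log (Q s x y)) t) ^ 2 := by
        rw [Finset.sum_congr rfl fun x _ => Finset.sum_congr rfl fun y _ => hterm x y]
        simp only [← Finset.mul_sum]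
        rw [Finset.sum_congr rfl fun x _ => by rw [hrearr x]]
        have hswap : ∑ x, pi t x * ∑ y, Q t x y * deriv (b y) t
            = ∑ y, pi t y * deriv (b y) t := by
          simp only [Finset.mul_sum]
          rw [Finset.sum_comm]
          refine Finset.sum_congr rfl fun y _ => ?_
          simp only [← mul_assoc]
          rw [← Finset.sum_mul, hpistat t y]
        have hmul : ∀ x, pi t x * (deriv a t + deriv (b x) t - ∑ y, Q t x y * deriv (b y) t)
            = pi t x * deriv a t + pi t x * deriv (b x) t
              - pi t x * ∑ y, Q t x y * deriv (b y) t := by intro x; ring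
        rw [Finset.sum_congr rfl fun x _ => hmul x, Finset.sum_sub_distrib,
          Finset.sum_add_distrib, ← Finset.sum_mul, hpi1, one_mul, hswap]
        ring

/-- For the exponential family of stochastic matrices, the second derivative of
`A θ = log ρ θ` equals the expectation, under the invariant pair distribution
`π_θ ⊙ P_θ`, of the square of `d/dθ log P_θ (X,Y)`; in particular it is
nonnegative and `A` is convex. -/
theorem stmt_12
    {S : Type*} [Fintype S] [DecidableEq S]
    (P : S → S → ℝ) (f : S → ℝ)
    (hP0 : ∀ x y, 0 ≤ P x y) (hP1 : ∀ x, ∑ y, P x y = 1)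
    (hirr : ∀ x y : S, ∃ n : ℕ, 0 < ((Matrix.of P) ^ n) x y)
    (ρ : ℝ → ℝ) (v : ℝ → S → ℝ)
    (hρ : ∀ θ, 0 < ρ θ) (hv : ∀ θ x, 0 < v θ x)
    (heig : ∀ θ x, ∑ y, P x y * Real.exp (θ * f y) * v θ y = ρ θ * v θ x)
    (hρd : ContDiff ℝ 2 ρ)
    (hvd : ∀ x, ContDiff ℝ 2 fun θ => v θ x)
    (pi : ℝ → S → ℝ)
    (hpi0 : ∀ θ x, 0 ≤ pi θ x) (hpi1 : ∀ θ, ∑ x, pi θ x = 1)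
    (hpistat : ∀ θ y,
      ∑ x, pi θ x * (P x y * Real.exp (θ * f y) * v θ y / (ρ θ * v θ x)) = pi θ y)
    (θ : ℝ) :
    deriv (deriv fun t => Real.log (ρ t)) θ
      = (∑ x, ∑ y, pi θ x * (P x y * Real.exp (θ * f y) * v θ y / (ρ θ * v θ x))
          * (deriv (fun t =>
              Real.log (P x y * Real.exp (t * f y) * v t y / (ρ t * v t x))) θ) ^ 2) ∧
    0 ≤ deriv (deriv fun t => Real.log (ρ t)) θ ∧
    ConvexOn ℝ Set.univ (fun t => Real.log (ρ t)) := by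
  have key : ∀ t : ℝ, deriv (deriv fun s => Real.log (ρ s)) t
      = ∑ x, ∑ y, pi t x * (P x y * Real.exp (t * f y) * v t y / (ρ t * v t x))
          * (deriv (fun s =>
              Real.log (P x y * Real.exp (s * f y) * v s y / (ρ s * v s x))) t) ^ 2 := by
    intro t
    exact aux12 P f hP0 ρ v hρ hv heig hρd hvd pi hpi1
      (fun s x y => P x y * Real.exp (s * f y) * v s y / (ρ s * v s x))
      (fun _ _ _ => rfl) hpistat t
  have hnn : ∀ t : ℝ, 0 ≤ deriv (deriv fun s => Real.log (ρ s)) t := by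
    intro t
    rw [key t]
    refine Finset.sum_nonneg fun x _ => Finset.sum_nonneg fun y _ => ?_
    have hQ0 : 0 ≤ P x y * Real.exp (t * f y) * v t y / (ρ t * v t x) :=
      div_nonneg (mul_nonneg (mul_nonneg (hP0 x y) (Real.exp_pos _).le) (hv t y).le)
        (mul_pos (hρ t) (hv t x)).le
    exact mul_nonneg (mul_nonneg (hpi0 t x) hQ0) (sq_nonneg _)
  refine ⟨key θ, hnn θ, ?_⟩
  -- convexity
  have hρdiff : Differentiable ℝ ρ := hρd.differentiable (by norm_num)
  have hρ'diff : Differentiable ℝ (deriv ρ) := by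
    have h : ContDiff ℝ (1+1) ρ := by norm_num; exact hρd
    exact ((contDiff_succ_iff_deriv.1 h).2.2).differentiable one_ne_zero
  have hAdiff : Differentiable ℝ (fun t => Real.log (ρ t)) := fun t =>
    (((hρdiff t).hasDerivAt).log (hρ t).ne').differentiableAt
  have hderivA : deriv (fun u => Real.log (ρ u)) = fun s => deriv ρ s / ρ s :=
    funext fun s => (((hρdiff s).hasDerivAt).log (hρ s).ne').deriv
  have hA'diff : Differentiable ℝ (deriv (fun t => Real.log (ρ t))) := by
    rw [hderivA]
    exact fun s => ((hρ'diff s).div (hρdiff s) (hρ s).ne')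
  exact convexOn_univ_of_deriv2_nonneg hAdiff hA'diff (by
    intro x
    have : (deriv^[2] fun t => Real.log (ρ t)) x = deriv (deriv fun t => Real.log (ρ t)) x := by
      simp [Function.iterate_succ, Function.iterate_one]
    rw [this]
    exact hnn x)
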